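/- Let F be a field and let M(x)=[A(x)|B(x)] be a bipartite pattern matrix in n unknowns with generic ranks r_A, r_B, r_M. Let 𝒜 be a largest left matchbox and ℬ a largest right matchbox such that v(𝒜,ℬ) is minimal among all pairs consisting of a largest left matchbox and a largest right matchbox, and let f_{𝒜ℬ}(x) = LCM{μ_𝒜(x), μ_ℬ(x), μ_{𝒜⋓ℬ}(x)}. Then for every a ∈ Fⁿ with f_{𝒜ℬ}(a) ≠ 0 one has rank A(a) = r_A, rank B(a) = r_B, and rank M(a) = r_M. -/

import Mathlib

open Matrix

/-- A position in the bipartite pattern: either an entry of the `m × p` A-block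
or an entry of the `m × q` B-block. -/
abbrev BipPos (m p q : ℕ) := (Fin m × Fin p) ⊕ (Fin m × Fin q)

/-- The row index of a position. -/
def posRow {m p q : ℕ} : BipPos m p q → Fin m := Sum.elim Prod.fst Prod.fst

/-- The column index of a position (as a column of the block matrix `[A|B]`). -/
def posCol {m p q : ℕ} : BipPos m p q → Fin p ⊕ Fin q := Sum.map Prod.snd Prod.snd

/-- The A-block of the pattern matrix, at the substitution `a`. -/
def patA {m p q n : ℕ} (pos : Fin n → BipPos m p q) {R : Type*} [CommRing R]
    (a : Fin n → R) : Matrix (Fin m) (Fin p) R :=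
  Matrix.of fun i j => ∑ l : Fin n, if pos l = Sum.inl (i, j) then a l else 0

/-- The B-block of the pattern matrix, at the substitution `a`. -/
def patB {m p q n : ℕ} (pos : Fin n → BipPos m p q) {R : Type*} [CommRing R]
    (a : Fin n → R) : Matrix (Fin m) (Fin q) R :=
  Matrix.of fun i k => ∑ l : Fin n, if pos l = Sum.inr (i, k) then a l else 0

/-- The full bipartite pattern matrix `M = [A | B]` at the substitution `a`. -/
def patM {m p q n : ℕ} (pos : Fin n → BipPos m p q) {R : Type*} [CommRing R]
    (a : Fin n → R) : Matrix (Fin m) (Fin p ⊕ Fin q) R :=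
  Matrix.fromCols (patA pos a) (patB pos a)

/-- The generic point: the variables `x₁, …, xₙ` viewed in the field
`K = F(x₁,…,xₙ)` of rational functions. -/
noncomputable def genericX (F : Type*) [Field F] (n : ℕ) :
    Fin n → FractionRing (MvPolynomial (Fin n) F) :=
  fun l => algebraMap (MvPolynomial (Fin n) F) (FractionRing (MvPolynomial (Fin n) F))
    (MvPolynomial.X l)

/-- The generic rank `r_A` of the A-block. -/
noncomputable def genRankA (F : Type*) [Field F] {m p q n : ℕ}
    (pos : Fin n → BipPos m p q) : ℕ :=
  (patA pos (genericX F n)).rank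

/-- The generic rank `r_B` of the B-block. -/
noncomputable def genRankB (F : Type*) [Field F] {m p q n : ℕ}
    (pos : Fin n → BipPos m p q) : ℕ :=
  (patB pos (genericX F n)).rank

/-- The generic rank `r_M` of `M = [A | B]`. -/
noncomputable def genRankM (F : Type*) [Field F] {m p q n : ℕ}
    (pos : Fin n → BipPos m p q) : ℕ :=
  (patM pos (genericX F n)).rank

/-- Equivalence of bipartite matrices: `[A'|B'] = [S·A·R₁ | S·B·R₂]` with
`S, R₁, R₂` invertible. -/
def BipEquiv {F : Type*} [Field F] {m p q : ℕ}
    (A : Matrix (Fin m) (Fin p) F) (B : Matrix (Fin m) (Fin q) F)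
    (A' : Matrix (Fin m) (Fin p) F) (B' : Matrix (Fin m) (Fin q) F) : Prop :=
  ∃ (S : Matrix (Fin m) (Fin m) F) (R₁ : Matrix (Fin p) (Fin p) F)
    (R₂ : Matrix (Fin q) (Fin q) F),
    IsUnit S ∧ IsUnit R₁ ∧ IsUnit R₂ ∧ A' = S * A * R₁ ∧ B' = S * B * R₂

/-- The A-block of the canonical bipartite matrix `C(r,s,t)`:
`I_r` in rows `1..r`, columns `1..r`, and `I_s` in rows `r+1..r+s`,
columns `r+1..r+s`. -/
def canonA (F : Type*) [Field F] (m p r s : ℕ) : Matrix (Fin m) (Fin p) F :=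
  Matrix.of fun i j => if (i : ℕ) = (j : ℕ) ∧ (i : ℕ) < r + s then 1 else 0

/-- The B-block of the canonical bipartite matrix `C(r,s,t)`:
`I_r` in rows `1..r`, columns `t+1..t+r`, and `I_t` in rows `r+s+1..r+s+t`,
columns `1..t`. -/
def canonB (F : Type*) [Field F] (m q r s t : ℕ) : Matrix (Fin m) (Fin q) F :=
  Matrix.of fun i k =>
    if ((i : ℕ) < r ∧ (k : ℕ) = t + (i : ℕ)) ∨
       (r + s ≤ (i : ℕ) ∧ (i : ℕ) < r + s + t ∧ (k : ℕ) + (r + s) = (i : ℕ)) then 1 else 0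

/-- A matchbox: a set of pattern positions, no two sharing a row index and no two
within the same block sharing a column index. -/
def IsMatchbox {m p q n : ℕ} (pos : Fin n → BipPos m p q) (S : Finset (Fin n)) : Prop :=
  ∀ l ∈ S, ∀ l' ∈ S, l ≠ l' →
    posRow (pos l) ≠ posRow (pos l') ∧ posCol (pos l) ≠ posCol (pos l')

/-- A left matchbox: a matchbox all of whose positions lie in the A-block. -/
def IsLeftMatchbox {m p q n : ℕ} (pos : Fin n → BipPos m p q) (S : Finset (Fin n)) : Prop :=
  IsMatchbox pos S ∧ ∀ l ∈ S, (pos l).isLeft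

/-- A right matchbox: a matchbox all of whose positions lie in the B-block. -/
def IsRightMatchbox {m p q n : ℕ} (pos : Fin n → BipPos m p q) (S : Finset (Fin n)) : Prop :=
  IsMatchbox pos S ∧ ∀ l ∈ S, (pos l).isRight

/-- A largest left matchbox. -/
def IsLargestLeft {m p q n : ℕ} (pos : Fin n → BipPos m p q) (S : Finset (Fin n)) : Prop :=
  IsLeftMatchbox pos S ∧ ∀ T : Finset (Fin n), IsLeftMatchbox pos T → T.card ≤ S.card

/-- A largest right matchbox. -/
def IsLargestRight {m p q n : ℕ} (pos : Fin n → BipPos m p q) (S : Finset (Fin n)) : Prop :=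
  IsRightMatchbox pos S ∧ ∀ T : Finset (Fin n), IsRightMatchbox pos T → T.card ≤ S.card

/-- The set of row indices met by the positions of `S`. -/
def rowSet {m p q n : ℕ} (pos : Fin n → BipPos m p q) (S : Finset (Fin n)) : Finset (Fin m) :=
  S.image fun l => posRow (pos l)

/-- `v(𝒜,ℬ)`: the number of row indices met by both `𝒜` and `ℬ`. -/
def vCommon {m p q n : ℕ} (pos : Fin n → BipPos m p q) (𝒜 ℬ : Finset (Fin n)) : ℕ :=
  (rowSet pos 𝒜 ∩ rowSet pos ℬ).card

/-- `𝒜 ⋓ ℬ`: `𝒜` together with those positions of `ℬ` whose row is not a row of `𝒜`. -/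
def mcup {m p q n : ℕ} (pos : Fin n → BipPos m p q) (𝒜 ℬ : Finset (Fin n)) : Finset (Fin n) :=
  𝒜 ∪ ℬ.filter fun l => posRow (pos l) ∉ rowSet pos 𝒜

/-- An optimal pair: a largest left matchbox and a largest right matchbox whose number of
common row indices is minimal among all such pairs. -/
def IsOptimalPair {m p q n : ℕ} (pos : Fin n → BipPos m p q) (𝒜 ℬ : Finset (Fin n)) : Prop :=
  IsLargestLeft pos 𝒜 ∧ IsLargestRight pos ℬ ∧
  ∀ 𝒜' ℬ' : Finset (Fin n), IsLargestLeft pos 𝒜' → IsLargestRight pos ℬ' →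
    vCommon pos 𝒜 ℬ ≤ vCommon pos 𝒜' ℬ'

/-- The characteristic vector `ε_S ∈ {0,1}ⁿ` of a set of labels. -/
def charVec (F : Type*) [Zero F] [One F] {n : ℕ} (S : Finset (Fin n)) : Fin n → F :=
  fun l => if l ∈ S then 1 else 0

/-- The minor `μ_S(x)` of `M(x)` on the rows and the columns met by the matchbox `S`
(as a polynomial; well defined up to sign, rows and columns being indexed by `S`). -/
noncomputable def minorX (F : Type*) [Field F] {m p q n : ℕ} (pos : Fin n → BipPos m p q)
    (S : Finset (Fin n)) : MvPolynomial (Fin n) F :=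
  (Matrix.of fun (l : S) (l' : S) =>
    patM pos (fun i => (MvPolynomial.X i : MvPolynomial (Fin n) F))
      (posRow (pos l)) (posCol (pos l'))).det

set_option linter.unusedSectionVars false
set_option maxHeartbeats 1000000

section RankMinor
variable {K : Type*} [Field K] {m' n' ι κ : Type*}
  [Fintype m'] [Fintype n'] [Fintype ι] [Fintype κ] [DecidableEq m'] [DecidableEq n']
  [DecidableEq ι] [DecidableEq κ]

/-- Selecting rows and columns does not increase rank. -/
lemma rank_submatrix_le' (A : Matrix m' n' K) (f : ι → m') (g : κ → n') :
    (A.submatrix f g).rank ≤ A.rank := by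
  have hrow : (A.submatrix f id) = (Matrix.of fun i j => if f i = j then (1:K) else 0) * A := by
    ext i c
    simp [Matrix.mul_apply]
  have hcol : (A.submatrix f id).submatrix id g
      = (A.submatrix f id) * (Matrix.of fun j i => if j = g i then (1:K) else 0) := by
    ext r i
    simp [Matrix.mul_apply]
  have h1 : A.submatrix f g = (A.submatrix f id).submatrix id g := rfl
  rw [h1, hcol]
  refine le_trans (Matrix.rank_mul_le_left _ _) ?_
  rw [hrow]
  exact Matrix.rank_mul_le_right _ _

lemma card_le_rank_of_det_ne_zero (A : Matrix m' n' K) (f : ι → m') (g : ι → n')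
    (h : (A.submatrix f g).det ≠ 0) : Fintype.card ι ≤ A.rank := by
  have : (A.submatrix f g).rank = Fintype.card ι :=
    Matrix.rank_of_isUnit _ ((Matrix.isUnit_iff_isUnit_det _).2 (isUnit_iff_ne_zero.2 h))
  calc Fintype.card ι = (A.submatrix f g).rank := this.symm
    _ ≤ A.rank := rank_submatrix_le' A f g

lemma exists_inj_cols (A : Matrix m' n' K) (r : ℕ) (hr : A.rank = r) :
    ∃ g : Fin r → n', Function.Injective g ∧
      LinearIndependent K (fun i => Aᵀ (g i)) := by
  classical
  obtain ⟨s, hs_sub, hs_span, hs_li⟩ := exists_linearIndependent K (Set.range Aᵀ)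
  have hsfin : s.Finite := (Set.finite_range _).subset hs_sub
  haveI := hsfin.fintype
  have hcard : r = Fintype.card s := by
    rw [← hr, Matrix.rank_eq_finrank_span_cols]
    change Module.finrank K (Submodule.span K (Set.range Aᵀ)) = _
    rw [← hs_span, finrank_span_set_eq_card hs_li,
      Set.toFinset_card]
  obtain e := Fintype.equivFinOfCardEq hcard.symm
  have hchoice : ∀ v : s, ∃ j : n', Aᵀ j = (v : m' → K) := fun v => hs_sub v.2
  choose j hj using hchoice
  refine ⟨fun i => j (e.symm i), ?_, ?_⟩
  · intro i i' hii
    have h2 : Aᵀ (j (e.symm i)) = Aᵀ (j (e.symm i')) := congrArg _ hii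
    rw [hj, hj] at h2
    exact e.symm.injective (Subtype.ext h2)
  · have : (fun i => Aᵀ (j (e.symm i))) = (fun v : s => (v : m' → K)) ∘ e.symm := by
      funext i; simp [hj]
    rw [this]
    exact hs_li.comp _ e.symm.injective

lemma exists_minor_of_rank (A : Matrix m' n' K) (r : ℕ) (hr : A.rank = r) :
    ∃ (f : Fin r → m') (g : Fin r → n'),
      Function.Injective f ∧ Function.Injective g ∧ (A.submatrix f g).det ≠ 0 := by
  classical
  obtain ⟨g, hg_inj, hg_li⟩ := exists_inj_cols A r hr
  set B : Matrix m' (Fin r) K := A.submatrix id g with hB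
  have hBt : Bᵀ = fun i => Aᵀ (g i) := by funext i j; rfl
  have hrankB : B.rank = r := by
    refine le_antisymm (le_trans (rank_submatrix_le' A id g) (le_of_eq hr)) ?_
    have : B.rank = Module.finrank K (Submodule.span K (Set.range Bᵀ)) :=
      Matrix.rank_eq_finrank_span_cols B
    rw [this, hBt, finrank_span_eq_card hg_li]
    simp
  have hrankBt : Bᵀ.rank = r := by rw [Matrix.rank_transpose]; exact hrankB
  obtain ⟨f, hf_inj, hf_li⟩ := exists_inj_cols Bᵀ r hrankBt
  have hrows : LinearIndependent K (fun i => B (f i)) := by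
    have h3 : (fun i => Bᵀᵀ (f i)) = fun i => B (f i) := by
      funext i; rw [Matrix.transpose_transpose]
    rwa [h3] at hf_li
  refine ⟨f, g, hf_inj, hg_inj, ?_⟩
  have hsq : A.submatrix f g = B.submatrix f id := rfl
  have hu : IsUnit (B.submatrix f id) := by
    rw [← Matrix.linearIndependent_rows_iff_isUnit]
    exact hrows
  rw [hsq]
  intro hdet
  rw [Matrix.isUnit_iff_isUnit_det, hdet] at hu
  exact (not_isUnit_zero : ¬ IsUnit (0:K)) hu

end RankMinor

section Matching
variable {α β : Type*} [DecidableEq α] [DecidableEq β] (N : α → Finset β)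

/-- A set of left vertices is matchable if there is an injective assignment into
neighborhoods. -/
def Matchable (W : Finset α) : Prop :=
  ∃ f : {x // x ∈ W} → β, Function.Injective f ∧ ∀ x : {x // x ∈ W}, f x ∈ N x.1

variable {N}

lemma card_le_of_inj_assign {W : Finset α} (f : {x // x ∈ W} → β)
    (hinj : Function.Injective f) {s : Finset α} (hs : s ⊆ W) {t : Finset β}
    (htarget : ∀ x : {x // x ∈ W}, x.1 ∈ s → f x ∈ t) : s.card ≤ t.card := by
  classical
  rw [← Finset.card_attach (s := s)]
  refine Finset.card_le_card_of_injOn (fun x => f ⟨x.1, hs x.2⟩) ?_ ?_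
  · intro x hx
    exact htarget _ x.2
  · intro x _ y _ hxy
    exact Subtype.ext (congrArg (Subtype.val : {a // a ∈ W} → α) (hinj hxy))

lemma matchable_iff_hall (W : Finset α) :
    Matchable N W ↔ ∀ s ⊆ W, s.card ≤ (s.biUnion N).card := by
  classical
  constructor
  · rintro ⟨f, hf, hfN⟩ s hs
    refine card_le_of_inj_assign f hf hs ?_
    intro x hx
    exact Finset.mem_biUnion.2 ⟨x.1, hx, hfN x⟩
  · intro h
    have := (Finset.all_card_le_biUnion_card_iff_exists_injective
      (fun x : {x // x ∈ W} => N x.1)).1 ?_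
    · obtain ⟨f, hf, hfN⟩ := this
      exact ⟨f, hf, hfN⟩
    · intro s
      have hmap : s.card = (s.image Subtype.val).card :=
        (Finset.card_image_of_injective _ Subtype.val_injective).symm
      have hsub : s.image Subtype.val ⊆ W := by
        intro x hx
        obtain ⟨y, _, rfl⟩ := Finset.mem_image.1 hx
        exact y.2
      have hbi : (s.image Subtype.val).biUnion N = s.biUnion fun x => N x.1 := by
        apply Finset.ext
        intro b
        simp [Finset.mem_biUnion]
      calc s.card = (s.image Subtype.val).card := hmap
        _ ≤ ((s.image Subtype.val).biUnion N).card := h _ hsub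
        _ = (s.biUnion fun x => N x.1).card := by rw [hbi]

lemma matchable_subset {W W' : Finset α} (h : Matchable N W) (hsub : W' ⊆ W) :
    Matchable N W' := by
  classical
  rw [matchable_iff_hall] at h ⊢
  exact fun s hs => h s (hs.trans hsub)

/-- Exchange property (transversal matroid). -/
lemma matchable_exchange {W1 W2 : Finset α} (h1 : Matchable N W1) (h2 : Matchable N W2)
    (hc : W1.card < W2.card) :
    ∃ r ∈ W2, r ∉ W1 ∧ Matchable N (insert r W1) := by
  classical
  by_contra hcon
  push_neg at hcon
  have hall1 : ∀ s ⊆ W1, s.card ≤ (s.biUnion N).card := (matchable_iff_hall W1).1 h1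
  -- for each r in W2 \ W1, get a tight set
  have key : ∀ r ∈ W2 \ W1, ∃ T ⊆ W1, (T.biUnion N).card = T.card ∧ N r ⊆ T.biUnion N := by
    intro r hr
    rw [Finset.mem_sdiff] at hr
    have hnm : ¬ Matchable N (insert r W1) := hcon r hr.1 hr.2
    rw [matchable_iff_hall] at hnm
    push_neg at hnm
    obtain ⟨s, hssub, hscard⟩ := hnm
    have hrs : r ∈ s := by
      by_contra hrs
      have : s ⊆ W1 := by
        intro x hx
        rcases Finset.mem_insert.1 (hssub hx) with h | h
        · exact absurd (h ▸ hx) hrs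
        · exact h
      exact absurd (hall1 s this) (not_le.2 hscard)
    set T := s.erase r with hT
    have hTsub : T ⊆ W1 := by
      intro x hx
      have hx' := Finset.mem_erase.1 hx
      rcases Finset.mem_insert.1 (hssub hx'.2) with h | h
      · exact absurd h hx'.1
      · exact h
    have hins : insert r T = s := Finset.insert_erase hrs
    have hcards : s.card = T.card + 1 := by
      rw [← hins, Finset.card_insert_of_notMem (Finset.notMem_erase _ _)]
    have hle : (s.biUnion N).card ≤ T.card := by omega
    have hsubNN : T.biUnion N ⊆ s.biUnion N :=
      Finset.biUnion_subset_biUnion_of_subset_left _ (hT ▸ Finset.erase_subset _ _)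
    have h4 : T.card ≤ (T.biUnion N).card := hall1 T hTsub
    have heq : T.biUnion N = s.biUnion N := by
      apply Finset.eq_of_subset_of_card_le hsubNN
      omega
    have h5 : (T.biUnion N).card = (s.biUnion N).card := by rw [heq]
    refine ⟨T, hTsub, by omega, ?_⟩
    rw [heq, ← hins]
    intro b hb
    exact Finset.mem_biUnion.2 ⟨r, Finset.mem_insert_self _ _, hb⟩
  choose! Tf hTf1 hTf2 hTf3 using key
  -- union of tight sets is tight
  have tight_union : ∀ s : Finset α, s ⊆ W2 \ W1 →
      ∃ T ⊆ W1, (T.biUnion N).card = T.card ∧ ∀ r ∈ s, N r ⊆ T.biUnion N := by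
    intro s hs
    induction s using Finset.induction_on with
    | empty => exact ⟨∅, Finset.empty_subset _, by simp, by simp⟩
    | insert _ _ hnotmem ih =>
      rename_i r s'
      have hr : r ∈ W2 \ W1 := hs (Finset.mem_insert_self _ _)
      obtain ⟨T, hT1, hT2, hT3⟩ := ih (fun x hx => hs (Finset.mem_insert_of_mem hx))
      set T' := T ∪ Tf r with hT'
      have hT'sub : T' ⊆ W1 := Finset.union_subset hT1 (hTf1 r hr)
      have hNN : T'.biUnion N = T.biUnion N ∪ (Tf r).biUnion N := by
        apply Finset.ext
        intro b
        simp only [Finset.mem_biUnion, Finset.mem_union, hT']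
        constructor
        · rintro ⟨x, hx | hx, hbx⟩
          · exact Or.inl ⟨x, hx, hbx⟩
          · exact Or.inr ⟨x, hx, hbx⟩
        · rintro (⟨x, hx, hbx⟩ | ⟨x, hx, hbx⟩)
          · exact ⟨x, Or.inl hx, hbx⟩
          · exact ⟨x, Or.inr hx, hbx⟩
      have hcap : (T ∩ Tf r).biUnion N ⊆ T.biUnion N ∩ (Tf r).biUnion N := by
        intro b hb
        obtain ⟨x, hx, hbx⟩ := Finset.mem_biUnion.1 hb
        have hx' := Finset.mem_inter.1 hx
        exact Finset.mem_inter.2 ⟨Finset.mem_biUnion.2 ⟨x, hx'.1, hbx⟩,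
          Finset.mem_biUnion.2 ⟨x, hx'.2, hbx⟩⟩
      have hsubmod : (T'.biUnion N).card ≤ T'.card := by
        have e1 : (T.biUnion N ∪ (Tf r).biUnion N).card + (T.biUnion N ∩ (Tf r).biUnion N).card
            = (T.biUnion N).card + ((Tf r).biUnion N).card :=
          Finset.card_union_add_card_inter _ _
        have e2 : (T ∩ Tf r).card ≤ ((T ∩ Tf r).biUnion N).card :=
          hall1 _ ((Finset.inter_subset_left).trans hT1)
        have e3 : ((T ∩ Tf r).biUnion N).card ≤ (T.biUnion N ∩ (Tf r).biUnion N).card :=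
          Finset.card_le_card hcap
        have e4 : T'.card + (T ∩ Tf r).card = T.card + (Tf r).card :=
          Finset.card_union_add_card_inter _ _
        have e5 := hTf2 r hr
        rw [hNN]
        omega
      have hge : T'.card ≤ (T'.biUnion N).card := hall1 _ hT'sub
      refine ⟨T', hT'sub, le_antisymm hsubmod hge, ?_⟩
      intro x hx
      rcases Finset.mem_insert.1 hx with h | h
      · subst h
        exact (hTf3 x hr).trans (by rw [hNN]; exact Finset.subset_union_right)
      · exact (hT3 x h).trans (by rw [hNN]; exact Finset.subset_union_left)
  obtain ⟨T, hTsub, hTcard, hTN⟩ := tight_union (W2 \ W1) (Finset.Subset.refl _)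
  -- final count
  obtain ⟨f2, hf2, hf2N⟩ := h2
  set D := (W2 \ W1) ∪ (W2 ∩ T) with hD
  have hDsub : D ⊆ W2 := by
    intro x hx
    rcases Finset.mem_union.1 hx with h | h
    · exact (Finset.mem_sdiff.1 h).1
    · exact (Finset.mem_inter.1 h).1
  have hDcount : D.card ≤ T.card := by
    rw [← hTcard]
    refine card_le_of_inj_assign f2 hf2 hDsub ?_
    intro x hx
    rcases Finset.mem_union.1 hx with h | h
    · exact hTN x.1 h (hf2N x)
    · have hxT : x.1 ∈ T := (Finset.mem_inter.1 h).2
      exact Finset.mem_biUnion.2 ⟨x.1, hxT, hf2N x⟩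
  have hDdisj : Disjoint (W2 \ W1) (W2 ∩ T) := by
    rw [Finset.disjoint_left]
    intro x hx hx'
    exact (Finset.mem_sdiff.1 hx).2 (hTsub (Finset.mem_inter.1 hx').2)
  have hDcard : D.card = (W2 \ W1).card + (W2 ∩ T).card := Finset.card_union_of_disjoint hDdisj
  -- T = (T ∩ W2) ∪ (T \ W2)
  have hTsplit : (T ∩ W2).card + (T \ W2).card = T.card := by
    rw [Finset.card_inter_add_card_sdiff]
  have hTW2 : (W2 ∩ T).card = (T ∩ W2).card := by rw [Finset.inter_comm]
  have hfinal : (W2 ∩ W1).card + (T \ W2).card ≤ W1.card := by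
    have hdisj : Disjoint (W2 ∩ W1) (T \ W2) := by
      rw [Finset.disjoint_left]
      intro x hx hx'
      exact (Finset.mem_sdiff.1 hx').2 (Finset.mem_inter.1 hx).1
    rw [← Finset.card_union_of_disjoint hdisj]
    refine Finset.card_le_card ?_
    intro x hx
    rcases Finset.mem_union.1 hx with h | h
    · exact (Finset.mem_inter.1 h).2
    · exact hTsub (Finset.mem_sdiff.1 h).1
  have hW2split : (W2 ∩ W1).card + (W2 \ W1).card = W2.card := by
    rw [Finset.card_inter_add_card_sdiff]
  omega

/-- Every matchable set extends to a matchable set at least as large as any other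
matchable set. -/
lemma matchable_extend {W1 W2 : Finset α} (h1 : Matchable N W1) (h2 : Matchable N W2) :
    ∃ W', W1 ⊆ W' ∧ Matchable N W' ∧ W2.card ≤ W'.card := by
  classical
  by_cases hc : W2.card ≤ W1.card
  · exact ⟨W1, Finset.Subset.refl _, h1, hc⟩
  · push_neg at hc
    obtain ⟨r, _, hrW1, hins⟩ := matchable_exchange h1 h2 hc
    have hcard : (insert r W1).card = W1.card + 1 := Finset.card_insert_of_notMem hrW1
    obtain ⟨W', hsub, hm, hcard'⟩ := matchable_extend hins h2
    exact ⟨W', (Finset.subset_insert _ _).trans hsub, hm, hcard'⟩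
termination_by W2.card - W1.card
decreasing_by simp_wf; omega

end Matching

section PatLemmas
variable {m p q n : ℕ} (pos : Fin n → BipPos m p q) {R R' : Type*} [CommRing R] [CommRing R']

lemma patA_map (φ : R →+* R') (x : Fin n → R) :
    (patA pos x).map φ = patA pos (fun l => φ (x l)) := by
  ext i j
  simp only [Matrix.map_apply, patA, Matrix.of_apply, map_sum, apply_ite φ, map_zero]

lemma patB_map (φ : R →+* R') (x : Fin n → R) :
    (patB pos x).map φ = patB pos (fun l => φ (x l)) := by
  ext i k
  simp only [Matrix.map_apply, patB, Matrix.of_apply, map_sum, apply_ite φ, map_zero]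

lemma patM_map (φ : R →+* R') (x : Fin n → R) :
    (patM pos x).map φ = patM pos (fun l => φ (x l)) := by
  ext i c
  cases c with
  | inl j => simpa [patM] using congrFun (congrFun (patA_map pos φ x) i) j
  | inr k => simpa [patM] using congrFun (congrFun (patB_map pos φ x) i) k

lemma patM_apply_inl (x : Fin n → R) (i : Fin m) (j : Fin p) :
    patM pos x i (Sum.inl j) = patA pos x i j := by
  rw [patM, Matrix.fromCols_apply_inl]

lemma patM_apply_inr (x : Fin n → R) (i : Fin m) (k : Fin q) :
    patM pos x i (Sum.inr k) = patB pos x i k := by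
  rw [patM, Matrix.fromCols_apply_inr]

/-- A nonzero entry of the pattern matrix comes from a label. -/
lemma exists_label_of_ne_zero (x : Fin n → R) (i : Fin m) (c : Fin p ⊕ Fin q)
    (h : patM pos x i c ≠ 0) : ∃ l, posRow (pos l) = i ∧ posCol (pos l) = c := by
  cases c with
  | inl j =>
    rw [patM_apply_inl] at h
    have h' : (∑ l : Fin n, if pos l = Sum.inl (i, j) then x l else 0) ≠ 0 := h
    obtain ⟨l, _, hl⟩ := Finset.exists_ne_zero_of_sum_ne_zero h'
    have hpl : pos l = Sum.inl (i, j) := by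
      by_contra hne
      simp [hne] at hl
    exact ⟨l, by simp [hpl, posRow], by simp [hpl, posCol]⟩
  | inr k =>
    rw [patM_apply_inr] at h
    have h' : (∑ l : Fin n, if pos l = Sum.inr (i, k) then x l else 0) ≠ 0 := h
    obtain ⟨l, _, hl⟩ := Finset.exists_ne_zero_of_sum_ne_zero h'
    have hpl : pos l = Sum.inr (i, k) := by
      by_contra hne
      simp [hne] at hl
    exact ⟨l, by simp [hpl, posRow], by simp [hpl, posCol]⟩

end PatLemmas
section Generic
open MvPolynomial

variable {F : Type*} [Field F] {m p q n : ℕ}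

local notation "Kf" => FractionRing (MvPolynomial (Fin n) F)

/-- Specialized rank is at most generic rank. -/
lemma rank_eval_le_generic {ι κ : Type*} [Fintype ι] [Fintype κ] [DecidableEq ι] [DecidableEq κ]
    (E : Matrix ι κ (MvPolynomial (Fin n) F)) (a : Fin n → F) :
    (E.map (MvPolynomial.eval a)).rank ≤
      (E.map (algebraMap (MvPolynomial (Fin n) F) Kf)).rank := by
  classical
  obtain ⟨f, g, _, _, hdet⟩ := exists_minor_of_rank (E.map (MvPolynomial.eval a)) _ rfl
  have hc1 : ((E.map (MvPolynomial.eval a)).submatrix f g).det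
      = MvPolynomial.eval a ((E.submatrix f g).det) := by
    rw [RingHom.map_det]
    rfl
  rw [hc1] at hdet
  have hpoly : (E.submatrix f g).det ≠ 0 := fun h0 => hdet (by rw [h0, map_zero])
  have halg : ((E.map (algebraMap (MvPolynomial (Fin n) F) Kf)).submatrix f g).det ≠ 0 := by
    have hc2 : ((E.map (algebraMap (MvPolynomial (Fin n) F) Kf)).submatrix f g).det
        = algebraMap (MvPolynomial (Fin n) F) Kf ((E.submatrix f g).det) := by
      rw [RingHom.map_det]
      rfl
    rw [hc2]
    intro h0
    exact hpoly (IsFractionRing.injective (MvPolynomial (Fin n) F) Kf (by rw [h0, map_zero]))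
  have := card_le_rank_of_det_ne_zero _ f g halg
  simpa using this

/-- Extract a matchbox from a nonzero generic minor of the pattern matrix. -/
lemma exists_matchbox_of_det_ne_zero (pos : Fin n → BipPos m p q)
    {ι : Type*} [Fintype ι] [DecidableEq ι] (f : ι → Fin m) (g : ι → Fin p ⊕ Fin q)
    (hf : Function.Injective f) (hg : Function.Injective g)
    (hdet : ((patM pos (fun l => (MvPolynomial.X l : MvPolynomial (Fin n) F))).submatrix
      f g).det ≠ 0) :
    ∃ T : Finset (Fin n), IsMatchbox pos T ∧ T.card = Fintype.card ι ∧
      ∀ l ∈ T, posCol (pos l) ∈ Set.range g := by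
  classical
  rw [Matrix.det_apply] at hdet
  obtain ⟨σ, _, hσ⟩ := Finset.exists_ne_zero_of_sum_ne_zero hdet
  have hprod : (∏ i, (patM pos (fun l => (MvPolynomial.X l : MvPolynomial (Fin n) F)))
      (f (σ i)) (g i)) ≠ 0 := by
    intro h0
    have h0' : (∏ i, ((patM pos (fun l => (MvPolynomial.X l : MvPolynomial (Fin n) F))).submatrix
        f g) (σ i) i) = 0 := h0
    exact hσ (by rw [h0', smul_zero])
  have hfac : ∀ i : ι, (patM pos (fun l => (MvPolynomial.X l : MvPolynomial (Fin n) F)))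
      (f (σ i)) (g i) ≠ 0 := fun i =>
    Finset.prod_ne_zero_iff.1 hprod i (Finset.mem_univ i)
  choose lab hlab1 hlab2 using fun i => exists_label_of_ne_zero pos _ _ _ (hfac i)
  have hlab_inj : Function.Injective lab := fun i i' h =>
    hg (by rw [← hlab2 i, ← hlab2 i', h])
  refine ⟨Finset.univ.image lab, ?_, ?_, ?_⟩
  · intro l hl l' hl' hne
    obtain ⟨i, _, rfl⟩ := Finset.mem_image.1 hl
    obtain ⟨i', _, rfl⟩ := Finset.mem_image.1 hl'
    have hii : i ≠ i' := fun h => hne (by rw [h])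
    constructor
    · rw [hlab1 i, hlab1 i']
      exact fun h => hii (σ.injective (hf h))
    · rw [hlab2 i, hlab2 i']
      exact fun h => hii (hg h)
  · rw [Finset.card_image_of_injective _ hlab_inj, Finset.card_univ]
  · intro l hl
    obtain ⟨i, _, rfl⟩ := Finset.mem_image.1 hl
    exact ⟨i, (hlab2 i).symm⟩

end Generic

section Bridge
variable {m p q n : ℕ}

/-- Neighborhood of a row in the A-block. -/
def leftNbhd (pos : Fin n → BipPos m p q) (i : Fin m) : Finset (Fin p) :=
  Finset.univ.filter fun j => ∃ l, pos l = Sum.inl (i, j)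

/-- Neighborhood of a row in the B-block. -/
def rightNbhd (pos : Fin n → BipPos m p q) (i : Fin m) : Finset (Fin q) :=
  Finset.univ.filter fun k => ∃ l, pos l = Sum.inr (i, k)

variable {pos : Fin n → BipPos m p q}

lemma rowSet_card {S : Finset (Fin n)} (hS : IsMatchbox pos S) :
    (rowSet pos S).card = S.card := by
  classical
  apply Finset.card_image_of_injOn
  intro l hl l' hl' hrow
  by_contra hne
  exact (hS l hl l' hl' hne).1 hrow

lemma IsMatchbox.subset {S T : Finset (Fin n)} (hS : IsMatchbox pos S) (h : T ⊆ S) :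
    IsMatchbox pos T := fun l hl l' hl' hne => hS l (h hl) l' (h hl') hne

lemma left_to_matchable {S : Finset (Fin n)} (hS : IsLeftMatchbox pos S) :
    Matchable (leftNbhd pos) (rowSet pos S) := by
  classical
  have hx : ∀ x : {x // x ∈ rowSet pos S}, ∃ jl : Fin p × Fin n,
      jl.2 ∈ S ∧ pos jl.2 = Sum.inl (x.1, jl.1) := by
    intro x
    obtain ⟨l, hl, hrow⟩ := Finset.mem_image.1 x.2
    have hleft := hS.2 l hl
    cases hpl : pos l with
    | inl z =>
      refine ⟨⟨z.2, l⟩, hl, ?_⟩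
      have hz : posRow (pos l) = z.1 := by rw [hpl]; rfl
      have : z.1 = x.1 := by rw [← hz, hrow]
      rw [hpl, ← this]
    | inr z => rw [hpl] at hleft; simp at hleft
  choose jl hjl1 hjl2 using hx
  refine ⟨fun x => (jl x).1, ?_, ?_⟩
  · intro x y hxy
    by_cases hll : (jl x).2 = (jl y).2
    · have h1 := hjl2 x
      rw [hll, hjl2 y] at h1
      exact Subtype.ext (congrArg Prod.fst (Sum.inl.inj h1)).symm
    · have hcol := (hS.1 _ (hjl1 x) _ (hjl1 y) hll).2
      apply absurd ?_ hcol
      rw [hjl2 x, hjl2 y]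
      simp only [posCol, Sum.map_inl]
      exact congrArg Sum.inl hxy
  · intro x
    rw [leftNbhd, Finset.mem_filter]
    exact ⟨Finset.mem_univ _, ⟨(jl x).2, hjl2 x⟩⟩

lemma matchable_to_left {W : Finset (Fin m)} (h : Matchable (leftNbhd pos) W) :
    ∃ S : Finset (Fin n), IsLeftMatchbox pos S ∧ rowSet pos S = W ∧ S.card = W.card := by
  classical
  obtain ⟨f, hfinj, hfN⟩ := h
  have hx : ∀ x : {x // x ∈ W}, ∃ l, pos l = Sum.inl (x.1, f x) := by
    intro x
    have := hfN x
    rw [leftNbhd, Finset.mem_filter] at this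
    exact this.2
  choose lab hlab using hx
  have hlabinj : Function.Injective lab := by
    intro x y hxy
    have h1 : (Sum.inl (x.1, f x) : BipPos m p q) = Sum.inl (y.1, f y) := by
      rw [← hlab x, ← hlab y, hxy]
    exact Subtype.ext (congrArg Prod.fst (Sum.inl.inj h1))
  refine ⟨Finset.univ.image lab, ⟨?_, ?_⟩, ?_, ?_⟩
  · intro l hl l' hl' hne
    obtain ⟨x, _, rfl⟩ := Finset.mem_image.1 hl
    obtain ⟨y, _, rfl⟩ := Finset.mem_image.1 hl'
    have hxy : x ≠ y := fun h => hne (by rw [h])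
    have hxy1 : x.1 ≠ y.1 := fun h => hxy (Subtype.ext h)
    rw [hlab x, hlab y]
    constructor
    · simpa [posRow] using hxy1
    · intro hcol
      simp only [posCol, Sum.map_inl] at hcol
      exact hxy (hfinj (Sum.inl.inj hcol))
  · intro l hl
    obtain ⟨x, _, rfl⟩ := Finset.mem_image.1 hl
    rw [hlab x]
    rfl
  · apply Finset.ext
    intro i
    constructor
    · intro hi
      obtain ⟨l, hl, hrow⟩ := Finset.mem_image.1 hi
      obtain ⟨x, _, rfl⟩ := Finset.mem_image.1 hl
      rw [hlab x] at hrow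
      have : posRow (Sum.inl (x.1, f x) : BipPos m p q) = x.1 := rfl
      rw [this] at hrow
      exact hrow ▸ x.2
    · intro hi
      refine Finset.mem_image.2 ⟨lab ⟨i, hi⟩, Finset.mem_image.2 ⟨⟨i, hi⟩, Finset.mem_univ _, rfl⟩, ?_⟩
      rw [hlab ⟨i, hi⟩]
      rfl
  · rw [Finset.card_image_of_injective _ hlabinj, Finset.card_univ, Fintype.card_coe]

lemma right_to_matchable {S : Finset (Fin n)} (hS : IsRightMatchbox pos S) :
    Matchable (rightNbhd pos) (rowSet pos S) := by
  classical
  have hx : ∀ x : {x // x ∈ rowSet pos S}, ∃ jl : Fin q × Fin n,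
      jl.2 ∈ S ∧ pos jl.2 = Sum.inr (x.1, jl.1) := by
    intro x
    obtain ⟨l, hl, hrow⟩ := Finset.mem_image.1 x.2
    have hright := hS.2 l hl
    cases hpl : pos l with
    | inr z =>
      refine ⟨⟨z.2, l⟩, hl, ?_⟩
      have hz : posRow (pos l) = z.1 := by rw [hpl]; rfl
      have : z.1 = x.1 := by rw [← hz, hrow]
      rw [hpl, ← this]
    | inl z => rw [hpl] at hright; simp at hright
  choose jl hjl1 hjl2 using hx
  refine ⟨fun x => (jl x).1, ?_, ?_⟩
  · intro x y hxy
    by_cases hll : (jl x).2 = (jl y).2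
    · have h1 := hjl2 x
      rw [hll, hjl2 y] at h1
      exact Subtype.ext (congrArg Prod.fst (Sum.inr.inj h1)).symm
    · have hcol := (hS.1 _ (hjl1 x) _ (hjl1 y) hll).2
      apply absurd ?_ hcol
      rw [hjl2 x, hjl2 y]
      simp only [posCol, Sum.map_inr]
      exact congrArg Sum.inr hxy
  · intro x
    rw [rightNbhd, Finset.mem_filter]
    exact ⟨Finset.mem_univ _, ⟨(jl x).2, hjl2 x⟩⟩

lemma matchable_to_right {W : Finset (Fin m)} (h : Matchable (rightNbhd pos) W) :
    ∃ S : Finset (Fin n), IsRightMatchbox pos S ∧ rowSet pos S = W ∧ S.card = W.card := by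
  classical
  obtain ⟨f, hfinj, hfN⟩ := h
  have hx : ∀ x : {x // x ∈ W}, ∃ l, pos l = Sum.inr (x.1, f x) := by
    intro x
    have := hfN x
    rw [rightNbhd, Finset.mem_filter] at this
    exact this.2
  choose lab hlab using hx
  have hlabinj : Function.Injective lab := by
    intro x y hxy
    have h1 : (Sum.inr (x.1, f x) : BipPos m p q) = Sum.inr (y.1, f y) := by
      rw [← hlab x, ← hlab y, hxy]
    exact Subtype.ext (congrArg Prod.fst (Sum.inr.inj h1))
  refine ⟨Finset.univ.image lab, ⟨?_, ?_⟩, ?_, ?_⟩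
  · intro l hl l' hl' hne
    obtain ⟨x, _, rfl⟩ := Finset.mem_image.1 hl
    obtain ⟨y, _, rfl⟩ := Finset.mem_image.1 hl'
    have hxy : x ≠ y := fun h => hne (by rw [h])
    have hxy1 : x.1 ≠ y.1 := fun h => hxy (Subtype.ext h)
    rw [hlab x, hlab y]
    constructor
    · simpa [posRow] using hxy1
    · intro hcol
      simp only [posCol, Sum.map_inr] at hcol
      exact hxy (hfinj (Sum.inr.inj hcol))
  · intro l hl
    obtain ⟨x, _, rfl⟩ := Finset.mem_image.1 hl
    rw [hlab x]
    rfl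
  · apply Finset.ext
    intro i
    constructor
    · intro hi
      obtain ⟨l, hl, hrow⟩ := Finset.mem_image.1 hi
      obtain ⟨x, _, rfl⟩ := Finset.mem_image.1 hl
      rw [hlab x] at hrow
      have : posRow (Sum.inr (x.1, f x) : BipPos m p q) = x.1 := rfl
      rw [this] at hrow
      exact hrow ▸ x.2
    · intro hi
      refine Finset.mem_image.2 ⟨lab ⟨i, hi⟩, Finset.mem_image.2 ⟨⟨i, hi⟩, Finset.mem_univ _, rfl⟩, ?_⟩
      rw [hlab ⟨i, hi⟩]
      rfl
  · rw [Finset.card_image_of_injective _ hlabinj, Finset.card_univ, Fintype.card_coe]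

end Bridge

section Comb
variable {m p q n : ℕ} {pos : Fin n → BipPos m p q}

/-- Any matchbox of the full pattern is bounded by an optimal pair. -/
lemma matchbox_card_le_optimal {𝒜 ℬ T : Finset (Fin n)}
    (hopt : IsOptimalPair pos 𝒜 ℬ) (hT : IsMatchbox pos T) :
    T.card + vCommon pos 𝒜 ℬ ≤ 𝒜.card + ℬ.card := by
  classical
  set TA := T.filter (fun l => (pos l).isLeft) with hTAdef
  set TB := T.filter (fun l => (pos l).isRight) with hTBdef
  have hTA : IsLeftMatchbox pos TA :=
    ⟨hT.subset (Finset.filter_subset _ _), fun l hl => (Finset.mem_filter.1 hl).2⟩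
  have hTB : IsRightMatchbox pos TB :=
    ⟨hT.subset (Finset.filter_subset _ _), fun l hl => (Finset.mem_filter.1 hl).2⟩
  have hsplit : TA.card + TB.card = T.card := by
    have hTBalt : TB = T.filter (fun l => ¬ ((pos l).isLeft = true)) := by
      apply Finset.ext
      intro l
      simp [hTBdef, Sum.not_isLeft]
    rw [hTAdef, hTBalt]
    exact Finset.card_filter_add_card_filter_not _
  have hdisj : ∀ x, x ∈ rowSet pos TA → x ∉ rowSet pos TB := by
    intro x hxA hxB
    obtain ⟨l, hl, hrl⟩ := Finset.mem_image.1 hxA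
    obtain ⟨l', hl', hrl'⟩ := Finset.mem_image.1 hxB
    have hne : l ≠ l' := by
      intro h
      have h1 := (Finset.mem_filter.1 hl).2
      have h2 := (Finset.mem_filter.1 hl').2
      rw [h] at h1
      rw [Sum.isRight_iff] at h2
      obtain ⟨z, hz⟩ := h2
      rw [hz] at h1
      simp at h1
    exact (hT l (Finset.mem_filter.1 hl).1 l' (Finset.mem_filter.1 hl').1 hne).1
      (by rw [hrl, hrl'])
  -- extend TA
  obtain ⟨W', hW'sub, hW'm, hW'card⟩ :=
    matchable_extend (left_to_matchable hTA) (left_to_matchable hopt.1.1)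
  obtain ⟨𝒜', h𝒜'mb, h𝒜'row, h𝒜'card⟩ := matchable_to_left hW'm
  obtain ⟨V', hV'sub, hV'm, hV'card⟩ :=
    matchable_extend (right_to_matchable hTB) (right_to_matchable hopt.2.1.1)
  obtain ⟨ℬ', hℬ'mb, hℬ'row, hℬ'card⟩ := matchable_to_right hV'm
  have hr𝒜 : (rowSet pos 𝒜).card = 𝒜.card := rowSet_card hopt.1.1.1
  have hrℬ : (rowSet pos ℬ).card = ℬ.card := rowSet_card hopt.2.1.1.1
  have h𝒜'le : 𝒜'.card ≤ 𝒜.card := hopt.1.2 𝒜' h𝒜'mb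
  have hℬ'le : ℬ'.card ≤ ℬ.card := hopt.2.1.2 ℬ' hℬ'mb
  have h𝒜'eq : 𝒜'.card = 𝒜.card := le_antisymm h𝒜'le (by omega)
  have hℬ'eq : ℬ'.card = ℬ.card := le_antisymm hℬ'le (by omega)
  have h𝒜'largest : IsLargestLeft pos 𝒜' :=
    ⟨h𝒜'mb, fun T' hT' => (hopt.1.2 T' hT').trans (le_of_eq h𝒜'eq.symm)⟩
  have hℬ'largest : IsLargestRight pos ℬ' :=
    ⟨hℬ'mb, fun T' hT' => (hopt.2.1.2 T' hT').trans (le_of_eq hℬ'eq.symm)⟩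
  have hv := hopt.2.2 𝒜' ℬ' h𝒜'largest hℬ'largest
  -- bound vCommon 𝒜' ℬ'
  have hvsub : rowSet pos 𝒜' ∩ rowSet pos ℬ'
      ⊆ (W' \ rowSet pos TA) ∪ (V' \ rowSet pos TB) := by
    intro x hx
    have hx' := Finset.mem_inter.1 hx
    rw [h𝒜'row] at hx'
    rw [hℬ'row] at hx'
    by_cases hxa : x ∈ rowSet pos TA
    · exact Finset.mem_union.2 (Or.inr (Finset.mem_sdiff.2 ⟨hx'.2, hdisj x hxa⟩))
    · exact Finset.mem_union.2 (Or.inl (Finset.mem_sdiff.2 ⟨hx'.1, hxa⟩))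
  have hTAr : (rowSet pos TA).card = TA.card := rowSet_card hTA.1
  have hTBr : (rowSet pos TB).card = TB.card := rowSet_card hTB.1
  have hWcard : (W' \ rowSet pos TA).card = W'.card - TA.card := by
    rw [Finset.card_sdiff_of_subset hW'sub, hTAr]
  have hVcard : (V' \ rowSet pos TB).card = V'.card - TB.card := by
    rw [Finset.card_sdiff_of_subset hV'sub, hTBr]
  have hTAle : TA.card ≤ W'.card := by
    rw [← hTAr]
    exact Finset.card_le_card hW'sub
  have hTBle : TB.card ≤ V'.card := by
    rw [← hTBr]
    exact Finset.card_le_card hV'sub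
  have hvbound : vCommon pos 𝒜' ℬ' ≤ (W'.card - TA.card) + (V'.card - TB.card) := by
    rw [vCommon, ← hWcard, ← hVcard]
    exact (Finset.card_le_card hvsub).trans (Finset.card_union_le _ _)
  have hW'A : W'.card = 𝒜'.card := h𝒜'card.symm
  have hV'B : V'.card = ℬ'.card := hℬ'card.symm
  omega

lemma mcup_card {𝒜 ℬ : Finset (Fin n)} (h𝒜 : IsMatchbox pos 𝒜) (hℬ : IsMatchbox pos ℬ)
    (hleft : ∀ l ∈ 𝒜, (pos l).isLeft) (hright : ∀ l ∈ ℬ, (pos l).isRight) :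
    (mcup pos 𝒜 ℬ).card + vCommon pos 𝒜 ℬ = 𝒜.card + ℬ.card := by
  classical
  have hdisj : Disjoint 𝒜 (ℬ.filter fun l => posRow (pos l) ∉ rowSet pos 𝒜) := by
    rw [Finset.disjoint_left]
    intro l hl hl'
    exact (Finset.mem_filter.1 hl').2 (Finset.mem_image.2 ⟨l, hl, rfl⟩)
  have hcard1 : (mcup pos 𝒜 ℬ).card
      = 𝒜.card + (ℬ.filter fun l => posRow (pos l) ∉ rowSet pos 𝒜).card := by
    rw [mcup, Finset.card_union_of_disjoint hdisj]
  have hcard2 : (ℬ.filter fun l => posRow (pos l) ∈ rowSet pos 𝒜).card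
      = vCommon pos 𝒜 ℬ := by
    rw [vCommon]
    have himg : (ℬ.filter fun l => posRow (pos l) ∈ rowSet pos 𝒜).image
        (fun l => posRow (pos l)) = rowSet pos 𝒜 ∩ rowSet pos ℬ := by
      apply Finset.ext
      intro x
      constructor
      · intro hx
        obtain ⟨l, hl, hrl⟩ := Finset.mem_image.1 hx
        have hl' := Finset.mem_filter.1 hl
        exact Finset.mem_inter.2 ⟨hrl ▸ hl'.2, Finset.mem_image.2 ⟨l, hl'.1, hrl⟩⟩
      · intro hx
        have hx' := Finset.mem_inter.1 hx
        obtain ⟨l, hl, hrl⟩ := Finset.mem_image.1 hx'.2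
        exact Finset.mem_image.2 ⟨l, Finset.mem_filter.2 ⟨hl, hrl ▸ hx'.1⟩, hrl⟩
    rw [← himg]
    refine (Finset.card_image_of_injOn ?_).symm
    intro l hl l' hl' hrow
    by_contra hne
    exact (hℬ l (Finset.mem_filter.1 hl).1 l' (Finset.mem_filter.1 hl').1 hne).1 hrow
  have hcard3 : (ℬ.filter fun l => posRow (pos l) ∈ rowSet pos 𝒜).card
      + (ℬ.filter fun l => posRow (pos l) ∉ rowSet pos 𝒜).card = ℬ.card :=
    Finset.card_filter_add_card_filter_not _
  omega

end Comb

section MinorEval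
variable {m p q n : ℕ}

lemma minorX_eval (F : Type*) [Field F] (pos : Fin n → BipPos m p q)
    (S : Finset (Fin n)) (a : Fin n → F) :
    MvPolynomial.eval a (minorX F pos S) =
      ((patM pos a).submatrix (fun l : {x // x ∈ S} => posRow (pos l.1))
        (fun l : {x // x ∈ S} => posCol (pos l.1))).det := by
  rw [minorX, RingHom.map_det]
  congr 1
  ext l l'
  have ha : (fun l => MvPolynomial.eval a ((MvPolynomial.X l : MvPolynomial (Fin n) F))) = a := by
    funext l
    exact MvPolynomial.eval_X l
  have hmap := patM_map pos (MvPolynomial.eval a)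
    (fun i => (MvPolynomial.X i : MvPolynomial (Fin n) F))
  rw [ha] at hmap
  exact congrFun (congrFun hmap (posRow (pos l.1))) (posCol (pos l'.1))

end MinorEval

/-- Lemma 6: for an optimal pair `(𝒜, ℬ)` of largest matchboxes and
any lowest common multiple `f` of `μ_𝒜`, `μ_ℬ`, `μ_{𝒜⋓ℬ}` (expressed by the usual
divisibility characterization of an LCM), every `a` with `f(a) ≠ 0` satisfies
`rank A(a) = r_A`, `rank B(a) = r_B`, `rank M(a) = r_M`. -/
theorem stmt_8 (F : Type*) [Field F] (m p q n : ℕ) (pos : Fin n → BipPos m p q)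
    (hpos : Function.Injective pos) (𝒜 ℬ : Finset (Fin n))
    (hopt : IsOptimalPair pos 𝒜 ℬ)
    (f : MvPolynomial (Fin n) F)
    (hdvd1 : minorX F pos 𝒜 ∣ f) (hdvd2 : minorX F pos ℬ ∣ f)
    (hdvd3 : minorX F pos (mcup pos 𝒜 ℬ) ∣ f)
    (hlcm : ∀ g : MvPolynomial (Fin n) F, minorX F pos 𝒜 ∣ g → minorX F pos ℬ ∣ g →
      minorX F pos (mcup pos 𝒜 ℬ) ∣ g → f ∣ g) :
    ∀ a : Fin n → F, MvPolynomial.eval a f ≠ 0 →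
      (patA pos a).rank = genRankA F pos ∧
      (patB pos a).rank = genRankB F pos ∧
      (patM pos a).rank = genRankM F pos := by
  classical
  intro a hfa
  set K := FractionRing (MvPolynomial (Fin n) F) with hK
  set X : Fin n → MvPolynomial (Fin n) F := fun l => MvPolynomial.X l with hXdef
  have hne : ∀ S : Finset (Fin n), minorX F pos S ∣ f →
      MvPolynomial.eval a (minorX F pos S) ≠ 0 := by
    intro S hdvd h0
    obtain ⟨g, rfl⟩ := hdvd
    rw [_root_.map_mul, h0, zero_mul] at hfa
    exact hfa rfl
  -- generic matrices as maps
  have hgenA : (patA pos X).map (algebraMap (MvPolynomial (Fin n) F) K)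
      = patA pos (genericX F n) := by
    rw [patA_map]
    rfl
  have hgenB : (patB pos X).map (algebraMap (MvPolynomial (Fin n) F) K)
      = patB pos (genericX F n) := by
    rw [patB_map]
    rfl
  have hgenM : (patM pos X).map (algebraMap (MvPolynomial (Fin n) F) K)
      = patM pos (genericX F n) := by
    rw [patM_map]
    rfl
  have haX : (fun l => MvPolynomial.eval a (X l)) = a := by
    funext l
    exact MvPolynomial.eval_X l
  have hevA : (patA pos X).map (MvPolynomial.eval a) = patA pos a := by
    rw [patA_map, haX]
  have hevB : (patB pos X).map (MvPolynomial.eval a) = patB pos a := by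
    rw [patB_map, haX]
  have hevM : (patM pos X).map (MvPolynomial.eval a) = patM pos a := by
    rw [patM_map, haX]
  -- upper bounds : specialization rank ≤ generic rank
  have hupA : (patA pos a).rank ≤ genRankA F pos := by
    have h := rank_eval_le_generic (patA pos X) a
    rw [hevA, hgenA] at h
    exact h
  have hupB : (patB pos a).rank ≤ genRankB F pos := by
    have h := rank_eval_le_generic (patB pos X) a
    rw [hevB, hgenB] at h
    exact h
  have hupM : (patM pos a).rank ≤ genRankM F pos := by
    have h := rank_eval_le_generic (patM pos X) a
    rw [hevM, hgenM] at h
    exact h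
  -- lower bound for M from the minor of 𝒜 ⋓ ℬ
  have hlowM : (mcup pos 𝒜 ℬ).card ≤ (patM pos a).rank := by
    have h0 := hne _ hdvd3
    rw [minorX_eval] at h0
    have h := card_le_rank_of_det_ne_zero (patM pos a) _ _ h0
    simpa [Fintype.card_coe] using h
  -- lower bound for A from the minor of 𝒜
  have hlowA : 𝒜.card ≤ (patA pos a).rank := by
    have h0 := hne _ hdvd1
    rw [minorX_eval] at h0
    have hleft : ∀ l : {x // x ∈ 𝒜}, ∃ j : Fin p, posCol (pos l.1) = Sum.inl j := by
      intro l
      have hL := hopt.1.1.2 l.1 l.2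
      cases hp : pos l.1 with
      | inl z => exact ⟨z.2, by simp [hp, posCol]⟩
      | inr z => rw [hp] at hL; simp at hL
    choose jcol hjcol using hleft
    have hmat : (patM pos a).submatrix (fun l : {x // x ∈ 𝒜} => posRow (pos l.1))
        (fun l : {x // x ∈ 𝒜} => posCol (pos l.1))
        = (patA pos a).submatrix (fun l : {x // x ∈ 𝒜} => posRow (pos l.1)) jcol := by
      ext l l'
      rw [Matrix.submatrix_apply, Matrix.submatrix_apply, hjcol l']
      exact patM_apply_inl pos a _ _
    rw [hmat] at h0
    have h := card_le_rank_of_det_ne_zero (patA pos a) _ _ h0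
    simpa [Fintype.card_coe] using h
  have hlowB : ℬ.card ≤ (patB pos a).rank := by
    have h0 := hne _ hdvd2
    rw [minorX_eval] at h0
    have hright : ∀ l : {x // x ∈ ℬ}, ∃ k : Fin q, posCol (pos l.1) = Sum.inr k := by
      intro l
      have hR := hopt.2.1.1.2 l.1 l.2
      cases hp : pos l.1 with
      | inr z => exact ⟨z.2, by simp [hp, posCol]⟩
      | inl z => rw [hp] at hR; simp at hR
    choose kcol hkcol using hright
    have hmat : (patM pos a).submatrix (fun l : {x // x ∈ ℬ} => posRow (pos l.1))
        (fun l : {x // x ∈ ℬ} => posCol (pos l.1))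
        = (patB pos a).submatrix (fun l : {x // x ∈ ℬ} => posRow (pos l.1)) kcol := by
      ext l l'
      rw [Matrix.submatrix_apply, Matrix.submatrix_apply, hkcol l']
      exact patM_apply_inr pos a _ _
    rw [hmat] at h0
    have h := card_le_rank_of_det_ne_zero (patB pos a) _ _ h0
    simpa [Fintype.card_coe] using h
  -- generic rank of A is at most the largest left matchbox
  have hgenAle : genRankA F pos ≤ 𝒜.card := by
    obtain ⟨f', g', hf', hg', hdet⟩ :=
      exists_minor_of_rank (patA pos (genericX F n)) (genRankA F pos) rfl
    rw [← hgenA] at hdet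
    have hc : (((patA pos X).map (algebraMap (MvPolynomial (Fin n) F) K)).submatrix f' g').det
        = algebraMap (MvPolynomial (Fin n) F) K (((patA pos X).submatrix f' g').det) := by
      rw [RingHom.map_det]
      rfl
    rw [hc] at hdet
    have hpoly : ((patA pos X).submatrix f' g').det ≠ 0 := by
      intro h
      exact hdet (by rw [h, map_zero])
    have heq : (patM pos X).submatrix f' (Sum.inl ∘ g') = (patA pos X).submatrix f' g' := by
        exact Matrix.ext fun i j => patM_apply_inl pos X _ _
    obtain ⟨T, hTmb, hTcard, hTcol⟩ := exists_matchbox_of_det_ne_zero pos f' (Sum.inl ∘ g')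
      hf' (Sum.inl_injective.comp hg') (by rw [heq]; exact hpoly)
    have hTleft : IsLeftMatchbox pos T := by
      refine ⟨hTmb, fun l hl => ?_⟩
      obtain ⟨i, hi⟩ := hTcol l hl
      cases hp : pos l with
      | inl z => rfl
      | inr z =>
        rw [hp] at hi
        simp [posCol] at hi
    have := hopt.1.2 T hTleft
    rw [hTcard] at this
    simpa using this
  have hgenBle : genRankB F pos ≤ ℬ.card := by
    obtain ⟨f', g', hf', hg', hdet⟩ :=
      exists_minor_of_rank (patB pos (genericX F n)) (genRankB F pos) rfl
    rw [← hgenB] at hdet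
    have hc : (((patB pos X).map (algebraMap (MvPolynomial (Fin n) F) K)).submatrix f' g').det
        = algebraMap (MvPolynomial (Fin n) F) K (((patB pos X).submatrix f' g').det) := by
      rw [RingHom.map_det]
      rfl
    rw [hc] at hdet
    have hpoly : ((patB pos X).submatrix f' g').det ≠ 0 := by
      intro h
      exact hdet (by rw [h, map_zero])
    have heq : (patM pos X).submatrix f' (Sum.inr ∘ g') = (patB pos X).submatrix f' g' := by
        exact Matrix.ext fun i j => patM_apply_inr pos X _ _
    obtain ⟨T, hTmb, hTcard, hTcol⟩ := exists_matchbox_of_det_ne_zero pos f' (Sum.inr ∘ g')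
      hf' (Sum.inr_injective.comp hg') (by rw [heq]; exact hpoly)
    have hTright : IsRightMatchbox pos T := by
      refine ⟨hTmb, fun l hl => ?_⟩
      obtain ⟨i, hi⟩ := hTcol l hl
      cases hp : pos l with
      | inr z => rfl
      | inl z =>
        rw [hp] at hi
        simp [posCol] at hi
    have := hopt.2.1.2 T hTright
    rw [hTcard] at this
    simpa using this
  have hgenMle : genRankM F pos ≤ (mcup pos 𝒜 ℬ).card := by
    obtain ⟨f', g', hf', hg', hdet⟩ :=
      exists_minor_of_rank (patM pos (genericX F n)) (genRankM F pos) rfl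
    rw [← hgenM] at hdet
    have hc : (((patM pos X).map (algebraMap (MvPolynomial (Fin n) F) K)).submatrix f' g').det
        = algebraMap (MvPolynomial (Fin n) F) K (((patM pos X).submatrix f' g').det) := by
      rw [RingHom.map_det]
      rfl
    rw [hc] at hdet
    have hpoly : ((patM pos X).submatrix f' g').det ≠ 0 := by
      intro h
      exact hdet (by rw [h, map_zero])
    obtain ⟨T, hTmb, hTcard, _⟩ :=
      exists_matchbox_of_det_ne_zero pos f' g' hf' hg' hpoly
    have h1 := matchbox_card_le_optimal hopt hTmb
    have h2 := mcup_card hopt.1.1.1 hopt.2.1.1.1 hopt.1.1.2 hopt.2.1.1.2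
    have h3 : T.card = genRankM F pos := by
      rw [hTcard]
      simp
    omega
  refine ⟨le_antisymm hupA (hgenAle.trans hlowA),
    le_antisymm hupB (hgenBle.trans hlowB),
    le_antisymm hupM (hgenMle.trans hlowM)⟩
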